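/- For every finite H ⊆ [p]^n, the average degree of the one-inclusion graph of H is at most 4 times the exponential dimension: avd(H) ≤ 4·d_E(H). -/

import Mathlib

open Finset

/-- The edge of the one-inclusion graph of `H ⊆ [p]^n` in direction `i` through `g`:
all members of `H` agreeing with `g` off coordinate `i`. -/
def edgeF {n p : ℕ} (H : Finset (Fin n → Fin p)) (i : Fin n) (g : Fin n → Fin p) :
    Finset (Fin n → Fin p) :=
  H.filter (fun h => ∀ j, j ≠ i → h j = g j)

/-- The shifting operator in direction `i`: each edge is pushed downward, i.e. replaced by
the words agreeing with its pattern off `i` whose `i`-th coordinate is among the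
`|e|` smallest values. -/
def shift {n p : ℕ} (i : Fin n) (H : Finset (Fin n → Fin p)) : Finset (Fin n → Fin p) :=
  Finset.univ.filter (fun g => (g i).val < (edgeF H i g).card)

/-- The projection of `H` to a sequence `S` of coordinates. -/
def projF {n p k : ℕ} (H : Finset (Fin n → Fin p)) (S : Fin k → Fin n) :
    Finset (Fin k → Fin p) :=
  H.image (fun h => fun j => h (S j))

/-- `H` E-shatters size `k` if some sequence of `k` coordinates has projection of size `≥ 2^k`. -/
def EShatters {n p : ℕ} (H : Finset (Fin n → Fin p)) (k : ℕ) : Prop :=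
  ∃ S : Fin k → Fin n, 2 ^ k ≤ (projF H S).card

/-- The exponential dimension: the largest `k` that `H` E-shatters. -/
noncomputable def dE {n p : ℕ} (H : Finset (Fin n → Fin p)) : ℕ :=
  sSup {k | EShatters H k}

/-- The number of edges of the one-inclusion graph of `H` in direction `j`
(equivalently, the number of distinct patterns of `H` off coordinate `j`). -/
def numEdges {n p : ℕ} (H : Finset (Fin n → Fin p)) (j : Fin n) : ℕ :=
  (H.image (fun h => fun k : {k : Fin n // k ≠ j} => h k.1)).card

/-- `avd'(H) = (1/|H|) Σ_{e ∈ E} (|e| − 1)`, over all edges including singletons. -/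
def avd' {n p : ℕ} (H : Finset (Fin n → Fin p)) : ℚ :=
  (∑ j : Fin n, ((H.card : ℚ) - (numEdges H j : ℚ))) / (H.card : ℚ)

/-- The degree of `v`: the number of non-singleton edges of the one-inclusion graph
containing `v`. -/
def deg {n p : ℕ} (H : Finset (Fin n → Fin p)) (v : Fin n → Fin p) : ℕ :=
  (Finset.univ.filter (fun j : Fin n => 2 ≤ (edgeF H j v).card)).card

/-- The average degree of the one-inclusion graph of `H`. -/
def avd {n p : ℕ} (H : Finset (Fin n → Fin p)) : ℚ :=
  (∑ v ∈ H, (deg H v : ℚ)) / (H.card : ℚ)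

lemma eshatters_le_card {n p k : ℕ} {H : Finset (Fin n → Fin p)} (h : EShatters H k) :
    k ≤ H.card := by
  obtain ⟨S, hS⟩ := h
  calc k ≤ 2 ^ k := Nat.le_of_lt (Nat.lt_two_pow_self (n := k))
    _ ≤ (projF H S).card := hS
    _ ≤ H.card := Finset.card_image_le

lemma bddAbove_eshatters {n p : ℕ} (H : Finset (Fin n → Fin p)) :
    BddAbove {k | EShatters H k} :=
  ⟨H.card, fun _ hk => eshatters_le_card hk⟩

lemma le_dE {n p k : ℕ} {H : Finset (Fin n → Fin p)} (h : EShatters H k) : k ≤ dE H :=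
  le_csSup (bddAbove_eshatters H) h

lemma eshatters_zero {n p : ℕ} {H : Finset (Fin n → Fin p)} (h : H.Nonempty) :
    EShatters H 0 := by
  refine ⟨Fin.elim0, ?_⟩
  have : (projF H Fin.elim0).Nonempty :=
    Finset.Nonempty.image h (fun h => fun j : Fin 0 => h (Fin.elim0 j))
  simpa using Finset.card_pos.mpr this

lemma eshatters_dE {n p : ℕ} {H : Finset (Fin n → Fin p)} (h : H.Nonempty) :
    EShatters H (dE H) :=
  Nat.sSup_mem (Set.nonempty_of_mem (eshatters_zero h)) (bddAbove_eshatters H)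

/-- number of extensions of `u` in `H` by a last coordinate -/
def mcount {n p : ℕ} (H : Finset (Fin (n+1) → Fin p)) (u : Fin n → Fin p) : ℕ :=
  (Finset.univ.filter fun a : Fin p => Fin.snoc u a ∈ H).card

/-- level sets of the multiplicity -/
def Ur {n p : ℕ} (H : Finset (Fin (n+1) → Fin p)) (r : ℕ) : Finset (Fin n → Fin p) :=
  Finset.univ.filter fun u => r < mcount H u

lemma mcount_le_p {n p : ℕ} (H : Finset (Fin (n+1) → Fin p)) (u : Fin n → Fin p) :
    mcount H u ≤ p := by
  simpa [mcount] using Finset.card_filter_le Finset.univ (fun a : Fin p => Fin.snoc u a ∈ H)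

lemma card_fiber_eq_mcount {n p : ℕ} (H : Finset (Fin (n+1) → Fin p)) (u : Fin n → Fin p) :
    (H.filter fun h => Fin.init h = u).card = mcount H u := by
  apply Finset.card_bij (fun h _ => h (Fin.last n))
  · intro h hh
    simp only [Finset.mem_filter] at hh ⊢
    refine ⟨Finset.mem_univ _, ?_⟩
    rw [← hh.2, Fin.snoc_init_self]
    exact hh.1
  · intro h1 h1m h2 h2m hl
    simp only [Finset.mem_filter] at h1m h2m
    rw [← Fin.snoc_init_self h1, ← Fin.snoc_init_self h2, h1m.2, h2m.2, hl]
  · intro a ha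
    simp only [Finset.mem_filter, Finset.mem_univ, true_and] at ha
    exact ⟨Fin.snoc u a, by simp [Finset.mem_filter, ha, Fin.init_snoc], by simp⟩

lemma card_eq_sum_mcount {n p : ℕ} (H : Finset (Fin (n+1) → Fin p)) :
    H.card = ∑ u : Fin n → Fin p, mcount H u := by
  have key : H.card = ∑ u : Fin n → Fin p, (H.filter fun h => Fin.init h = u).card :=
    Finset.card_eq_sum_card_fiberwise (fun x _ => Finset.mem_univ _)
  rw [key]
  exact Finset.sum_congr rfl fun u _ => card_fiber_eq_mcount H u

lemma sum_Ur_card {n p : ℕ} (H : Finset (Fin (n+1) → Fin p)) :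
    ∑ r ∈ Finset.range p, (Ur H r).card = H.card := by
  rw [card_eq_sum_mcount]
  have : ∀ r, (Ur H r).card = ∑ u : Fin n → Fin p, if r < mcount H u then 1 else 0 := by
    intro r; rw [Ur, Finset.card_filter]
  simp only [this]
  rw [Finset.sum_comm]
  refine Finset.sum_congr rfl fun u _ => ?_
  have hm := mcount_le_p H u
  rw [← Finset.card_filter]
  have : (Finset.range p).filter (fun x => x < mcount H u) = Finset.range (mcount H u) := by
    ext x; simp only [Finset.mem_filter, Finset.mem_range]; omega
  rw [this, Finset.card_range]

def offj {n p : ℕ} (j : Fin n) (u : Fin n → Fin p) : {k : Fin n // k ≠ j} → Fin p :=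
  fun k => u k.1

def psi {n p : ℕ} (j : Fin n) (h : Fin (n+1) → Fin p) :
    ({k : Fin n // k ≠ j} → Fin p) × Fin p :=
  (offj j (Fin.init h), h (Fin.last n))

def phij {n p : ℕ} (j : Fin n) (g : {k : Fin (n+1) // k ≠ j.castSucc} → Fin p) :
    ({k : Fin n // k ≠ j} → Fin p) × Fin p :=
  (fun k => g ⟨k.1.castSucc, by simpa [Fin.castSucc_inj] using k.2⟩,
   g ⟨Fin.last n, (Fin.castSucc_lt_last j).ne'⟩)

lemma phij_injective {n p : ℕ} (j : Fin n) : Function.Injective (phij (p := p) j) := by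
  intro g1 g2 hg
  funext k
  obtain ⟨k, hk⟩ := k
  induction k using Fin.lastCases with
  | last => exact congrArg Prod.snd hg
  | cast k0 =>
      have hk0 : k0 ≠ j := fun h => hk (by rw [h])
      exact congrFun (congrArg Prod.fst hg) ⟨k0, hk0⟩

lemma numEdges_castSucc_eq {n p : ℕ} (H : Finset (Fin (n+1) → Fin p)) (j : Fin n) :
    numEdges H j.castSucc = (H.image (psi j)).card := by
  rw [numEdges, ← Finset.card_image_of_injective _ (phij_injective (p := p) j),
    Finset.image_image]
  congr 1

def phiLast {n p : ℕ} (g : {k : Fin (n+1) // k ≠ Fin.last n} → Fin p) : Fin n → Fin p :=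
  fun k => g ⟨k.castSucc, (Fin.castSucc_lt_last k).ne⟩

lemma phiLast_injective {n p : ℕ} : Function.Injective (phiLast (n := n) (p := p)) := by
  intro g1 g2 hg
  funext k
  obtain ⟨k, hk⟩ := k
  induction k using Fin.lastCases with
  | last => exact absurd rfl hk
  | cast k0 => exact congrFun hg k0

lemma numEdges_last_eq {n p : ℕ} (H : Finset (Fin (n+1) → Fin p)) :
    numEdges H (Fin.last n) = (H.image Fin.init).card := by
  rw [numEdges, ← Finset.card_image_of_injective _ (phiLast_injective (n := n) (p := p)),
    Finset.image_image]
  congr 1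

lemma image_init_eq_Ur0 {n p : ℕ} (H : Finset (Fin (n+1) → Fin p)) :
    H.image Fin.init = Ur H 0 := by
  ext u
  simp only [Finset.mem_image, Ur, Finset.mem_filter, Finset.mem_univ, true_and]
  constructor
  · rintro ⟨h, hh, rfl⟩
    refine Finset.card_pos.mpr ⟨h (Fin.last n), ?_⟩
    simp only [Finset.mem_filter, Finset.mem_univ, true_and, Fin.snoc_init_self]
    exact hh
  · intro hm
    obtain ⟨a, ha⟩ := Finset.card_pos.mp hm
    simp only [Finset.mem_filter, Finset.mem_univ, true_and] at ha
    exact ⟨Fin.snoc u a, ha, by simp⟩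

lemma mcount_le_cnt {n p : ℕ} (H : Finset (Fin (n+1) → Fin p)) (j : Fin n) (u : Fin n → Fin p) :
    mcount H u ≤ ((H.image (psi j)).filter (fun q => q.1 = offj j u)).card := by
  apply Finset.card_le_card_of_injOn (fun a => (offj j u, a))
  · intro a ha
    simp only [Finset.mem_coe, Finset.mem_filter, Finset.mem_univ, true_and] at ha ⊢
    refine ⟨Finset.mem_image.mpr ⟨Fin.snoc u a, ha, ?_⟩, trivial⟩
    simp [psi, offj]
  · intro a _ b _ hab
    exact congrArg Prod.snd hab

lemma sum_numEdges_Ur_le {n p : ℕ} (H : Finset (Fin (n+1) → Fin p)) (j : Fin n) :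
    ∑ r ∈ Finset.range p, numEdges (Ur H r) j ≤ numEdges H j.castSucc := by
  rw [numEdges_castSucc_eq]
  set A := H.image (psi j) with hA
  set T := A.image Prod.fst with hT
  have hcard : A.card = ∑ s ∈ T, (A.filter (fun q => q.1 = s)).card :=
    Finset.card_eq_sum_card_fiberwise (fun x hx => Finset.mem_image_of_mem _ hx)
  have hne : ∀ r, numEdges (Ur H r) j = ((Ur H r).image (offj j)).card := fun r => rfl
  have hsub : ∀ r, (Ur H r).image (offj j) ⊆ T := by
    intro r s hs
    obtain ⟨u, hu, rfl⟩ := Finset.mem_image.mp hs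
    have hm : 0 < mcount H u := lt_of_le_of_lt (Nat.zero_le r) ((Finset.mem_filter.mp hu).2)
    have hpos : 0 < ((A.filter (fun q => q.1 = offj j u))).card :=
      lt_of_lt_of_le hm (mcount_le_cnt H j u)
    obtain ⟨q, hq⟩ := Finset.card_pos.mp hpos
    rw [Finset.mem_filter] at hq
    exact hq.2 ▸ Finset.mem_image_of_mem _ hq.1
  calc ∑ r ∈ Finset.range p, numEdges (Ur H r) j
      = ∑ r ∈ Finset.range p, ∑ s ∈ T, (if s ∈ (Ur H r).image (offj j) then 1 else 0) := by
        refine Finset.sum_congr rfl fun r hr => ?_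
        rw [hne, ← Finset.card_filter, Finset.filter_mem_eq_inter,
          Finset.inter_eq_right.mpr (hsub r)]
    _ = ∑ s ∈ T, ∑ r ∈ Finset.range p, (if s ∈ (Ur H r).image (offj j) then 1 else 0) :=
        Finset.sum_comm
    _ ≤ ∑ s ∈ T, (A.filter (fun q => q.1 = s)).card := by
        refine Finset.sum_le_sum fun s hs => ?_
        rw [← Finset.card_filter]
        have hss : (Finset.range p).filter (fun r => s ∈ (Ur H r).image (offj j)) ⊆
            Finset.range ((A.filter (fun q => q.1 = s)).card) := by
          intro r hr
          rw [Finset.mem_filter] at hr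
          obtain ⟨u, hu, rfl⟩ := Finset.mem_image.mp hr.2
          have : r < mcount H u := (Finset.mem_filter.mp hu).2
          exact Finset.mem_range.mpr (lt_of_lt_of_le this (mcount_le_cnt H j u))
        simpa using Finset.card_le_card hss
    _ = A.card := hcard.symm

lemma eshatters_of_Ur {n p r k : ℕ} {H : Finset (Fin (n+1) → Fin p)}
    (h : EShatters (Ur H r) k) : EShatters H k := by
  obtain ⟨S, hS⟩ := h
  refine ⟨fun j => (S j).castSucc, le_trans hS (Finset.card_le_card ?_)⟩
  intro q hq
  obtain ⟨u, hu, rfl⟩ := Finset.mem_image.mp hq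
  have hm : 0 < mcount H u := lt_of_le_of_lt (Nat.zero_le r) ((Finset.mem_filter.mp hu).2)
  obtain ⟨a, ha⟩ := Finset.card_pos.mp hm
  simp only [Finset.mem_filter, Finset.mem_univ, true_and] at ha
  refine Finset.mem_image.mpr ⟨Fin.snoc u a, ha, ?_⟩
  funext j'
  simp

lemma eshatters_succ_of_Ur {n p r k : ℕ} {H : Finset (Fin (n+1) → Fin p)} (hr : 1 ≤ r)
    (h : EShatters (Ur H r) k) : EShatters H (k + 1) := by
  obtain ⟨S, hS⟩ := h
  set S' : Fin (k+1) → Fin (n+1) := Fin.snoc (fun j => (S j).castSucc) (Fin.last n) with hS'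
  refine ⟨S', ?_⟩
  set W := (projF H S').filter (fun w => (Fin.init w : Fin k → Fin p) ∈ projF (Ur H r) S) with hW
  have hfib : W.card = ∑ q ∈ projF (Ur H r) S,
      (W.filter (fun w => (Fin.init w : Fin k → Fin p) = q)).card :=
    Finset.card_eq_sum_card_fiberwise (fun w hw => (Finset.mem_filter.mp hw).2)
  have hmemW : ∀ u : Fin n → Fin p, u ∈ Ur H r → ∀ a : Fin p, Fin.snoc u a ∈ H →
      Fin.snoc (fun j => u (S j)) a ∈ W ∧
        Fin.init (α := fun _ : Fin (k+1) => Fin p) (Fin.snoc (fun j => u (S j)) a) = (fun j => u (S j)) := by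
    intro u hu a ha
    have hproj : (fun j' => (Fin.snoc u a : Fin (n+1) → Fin p) (S' j')) = Fin.snoc (α := fun _ : Fin (k+1) => Fin p) (fun j => u (S j)) a := by
      funext j'
      induction j' using Fin.lastCases with
      | last => simp [hS']
      | cast i => simp [hS']
    constructor
    · rw [hW, Finset.mem_filter]
      constructor
      · exact Finset.mem_image.mpr ⟨Fin.snoc u a, ha, hproj⟩
      · rw [Fin.init_snoc]
        exact Finset.mem_image.mpr ⟨u, hu, rfl⟩
    · simp
  have htwo : ∀ q ∈ projF (Ur H r) S, 2 ≤ (W.filter (fun w => (Fin.init w : Fin k → Fin p) = q)).card := by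
    intro q hq
    obtain ⟨u, hu, rfl⟩ := Finset.mem_image.mp hq
    have hm : 1 < mcount H u := lt_of_le_of_lt hr (Finset.mem_filter.mp hu).2
    obtain ⟨a, ha, b, hb, hab⟩ := Finset.one_lt_card.mp hm
    simp only [Finset.mem_filter, Finset.mem_univ, true_and] at ha hb
    have hamem := hmemW u hu a ha
    have hbmem := hmemW u hu b hb
    apply Finset.one_lt_card.mpr
    refine ⟨Fin.snoc (fun j => u (S j)) a, ?_, Fin.snoc (fun j => u (S j)) b, ?_, ?_⟩
    · exact Finset.mem_filter.mpr ⟨hamem.1, hamem.2⟩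
    · exact Finset.mem_filter.mpr ⟨hbmem.1, hbmem.2⟩
    · intro hcon
      apply hab
      have := congrFun hcon (Fin.last k)
      simpa using this
  calc 2 ^ (k + 1) = 2 * 2 ^ k := by ring
    _ ≤ 2 * (projF (Ur H r) S).card := by omega
    _ ≤ ∑ q ∈ projF (Ur H r) S, (W.filter (fun w => (Fin.init w : Fin k → Fin p) = q)).card := by
        rw [two_mul]
        calc (projF (Ur H r) S).card + (projF (Ur H r) S).card
            = ∑ q ∈ projF (Ur H r) S, 2 := by rw [Finset.sum_const]; ring
          _ ≤ _ := Finset.sum_le_sum htwo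
    _ = W.card := hfib.symm
    _ ≤ (projF H S').card := Finset.card_le_card (Finset.filter_subset _ _)

lemma sum_defect_le : ∀ (n : ℕ) {p : ℕ} (H : Finset (Fin n → Fin p)),
    ∑ j : Fin n, (H.card - numEdges H j) ≤ 2 * dE H * H.card := by
  intro n
  induction n with
  | zero => intro p H; simp
  | succ n ih =>
    intro p H
    have hterm : ∀ r ∈ Finset.range p,
        (∑ j : Fin n, ((Ur H r).card - numEdges (Ur H r) j)) +
          (if 1 ≤ r then (Ur H r).card else 0) ≤ 2 * dE H * (Ur H r).card := by
      intro r _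
      rcases Finset.eq_empty_or_nonempty (Ur H r) with he | hne
      · simp [he, numEdges]
      · have hIH := ih (Ur H r)
        have hdE : dE (Ur H r) ≤ dE H := le_dE (eshatters_of_Ur (eshatters_dE hne))
        by_cases h1 : 1 ≤ r
        · have hdE1 : dE (Ur H r) + 1 ≤ dE H :=
            le_dE (eshatters_succ_of_Ur h1 (eshatters_dE hne))
          rw [if_pos h1]
          calc (∑ j : Fin n, ((Ur H r).card - numEdges (Ur H r) j)) + (Ur H r).card
              ≤ 2 * dE (Ur H r) * (Ur H r).card + (Ur H r).card := by omega
            _ = (2 * dE (Ur H r) + 1) * (Ur H r).card := by ring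
            _ ≤ (2 * dE H) * (Ur H r).card := Nat.mul_le_mul_right _ (by omega)
        · rw [if_neg h1, add_zero]
          calc ∑ j : Fin n, ((Ur H r).card - numEdges (Ur H r) j)
              ≤ 2 * dE (Ur H r) * (Ur H r).card := hIH
            _ ≤ 2 * dE H * (Ur H r).card := Nat.mul_le_mul_right _ (by omega)
    have h1 : ∀ j : Fin n, H.card - numEdges H j.castSucc ≤
        ∑ r ∈ Finset.range p, ((Ur H r).card - numEdges (Ur H r) j) := by
      intro j
      have h2 := sum_numEdges_Ur_le H j
      have h3 := sum_Ur_card H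
      have h4 : ∑ r ∈ Finset.range p, (Ur H r).card ≤
          ∑ r ∈ Finset.range p, (((Ur H r).card - numEdges (Ur H r) j) + numEdges (Ur H r) j) :=
        Finset.sum_le_sum (fun r _ => by omega)
      rw [Finset.sum_add_distrib] at h4
      omega
    have hsplit : H.card ≤
        (∑ r ∈ Finset.range p, (if 1 ≤ r then (Ur H r).card else 0)) + (Ur H 0).card := by
      have hpt : ∀ r ∈ Finset.range p, (Ur H r).card ≤
          (if 1 ≤ r then (Ur H r).card else 0) + (if r = 0 then (Ur H 0).card else 0) := by
        intro r _
        rcases Nat.eq_zero_or_pos r with rfl | hr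
        · simp
        · simp [Nat.one_le_iff_ne_zero.mpr (Nat.pos_iff_ne_zero.mp hr), Nat.pos_iff_ne_zero.mp hr]
      calc H.card = ∑ r ∈ Finset.range p, (Ur H r).card := (sum_Ur_card H).symm
        _ ≤ ∑ r ∈ Finset.range p, ((if 1 ≤ r then (Ur H r).card else 0) +
              (if r = 0 then (Ur H 0).card else 0)) := Finset.sum_le_sum hpt
        _ = (∑ r ∈ Finset.range p, (if 1 ≤ r then (Ur H r).card else 0)) +
              ∑ r ∈ Finset.range p, (if r = 0 then (Ur H 0).card else 0) :=
            Finset.sum_add_distrib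
        _ ≤ _ := by
            apply Nat.add_le_add_left
            rw [Finset.sum_ite_eq' (Finset.range p) 0 (fun _ => (Ur H 0).card)]
            split <;> omega
    have hlast : H.card - numEdges H (Fin.last n) ≤
        ∑ r ∈ Finset.range p, (if 1 ≤ r then (Ur H r).card else 0) := by
      rw [numEdges_last_eq, image_init_eq_Ur0]
      omega
    calc ∑ j' : Fin (n+1), (H.card - numEdges H j')
        = (∑ j : Fin n, (H.card - numEdges H (Fin.castSucc j))) +
            (H.card - numEdges H (Fin.last n)) := Fin.sum_univ_castSucc _
      _ ≤ (∑ j : Fin n, ∑ r ∈ Finset.range p, ((Ur H r).card - numEdges (Ur H r) j)) +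
            ∑ r ∈ Finset.range p, (if 1 ≤ r then (Ur H r).card else 0) :=
          add_le_add (Finset.sum_le_sum fun j _ => h1 j) hlast
      _ = ∑ r ∈ Finset.range p, ((∑ j : Fin n, ((Ur H r).card - numEdges (Ur H r) j)) +
            (if 1 ≤ r then (Ur H r).card else 0)) := by
          rw [Finset.sum_comm, ← Finset.sum_add_distrib]
      _ ≤ ∑ r ∈ Finset.range p, 2 * dE H * (Ur H r).card := Finset.sum_le_sum hterm
      _ = 2 * dE H * H.card := by rw [← Finset.mul_sum, sum_Ur_card]

lemma edgeF_eq_fiber {n p : ℕ} (H : Finset (Fin n → Fin p)) (j : Fin n) (v : Fin n → Fin p) :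
    edgeF H j v = H.filter (fun h => offj j h = offj j v) := by
  apply Finset.filter_congr
  intro h _
  constructor
  · intro hh; funext k; exact hh k.1 k.2
  · intro hh k hk; exact congrFun hh ⟨k, hk⟩

lemma per_direction {n p : ℕ} (H : Finset (Fin n → Fin p)) (j : Fin n) :
    ∑ v ∈ H, (if 2 ≤ (edgeF H j v).card then 1 else 0) ≤ 2 * (H.card - numEdges H j) := by
  set T := H.image (offj j) with hT
  have hmaps : ∀ x ∈ H, offj j x ∈ T := fun x hx => Finset.mem_image_of_mem (offj j) hx
  have hfib := Finset.sum_fiberwise_of_maps_to hmaps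
    (fun v => (if 2 ≤ (edgeF H j v).card then 1 else 0 : ℕ))
  have hinner : ∀ t ∈ T,
      (∑ v ∈ H.filter (fun v => offj j v = t), (if 2 ≤ (edgeF H j v).card then 1 else 0))
      = (if 2 ≤ (H.filter (fun v => offj j v = t)).card
          then (H.filter (fun v => offj j v = t)).card else 0) := by
    intro t ht
    have hedge : ∀ v ∈ H.filter (fun v => offj j v = t),
        edgeF H j v = H.filter (fun v => offj j v = t) := by
      intro v hv
      rw [Finset.mem_filter] at hv
      rw [edgeF_eq_fiber, hv.2]
    rw [Finset.sum_congr rfl (fun v hv => by rw [hedge v hv])]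
    rw [Finset.sum_const, smul_eq_mul]
    split <;> simp
  have hcard : H.card = ∑ t ∈ T, (H.filter (fun v => offj j v = t)).card :=
    Finset.card_eq_sum_card_fiberwise hmaps
  have hTcard : numEdges H j = T.card := rfl
  have hpos : ∀ t ∈ T, 1 ≤ (H.filter (fun v => offj j v = t)).card := by
    intro t ht
    obtain ⟨v, hv, rfl⟩ := Finset.mem_image.mp ht
    exact Finset.card_pos.mpr ⟨v, Finset.mem_filter.mpr ⟨hv, rfl⟩⟩
  have hsum1 : (∑ t ∈ T, ((H.filter (fun v => offj j v = t)).card - 1)) + T.card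
      = ∑ t ∈ T, (H.filter (fun v => offj j v = t)).card := by
    rw [Finset.card_eq_sum_ones T, ← Finset.sum_add_distrib]
    refine Finset.sum_congr rfl fun t ht => ?_
    have := hpos t ht
    omega
  calc ∑ v ∈ H, (if 2 ≤ (edgeF H j v).card then 1 else 0)
      = ∑ t ∈ T, (∑ v ∈ H.filter (fun v => offj j v = t),
          (if 2 ≤ (edgeF H j v).card then 1 else 0)) := hfib.symm
    _ = ∑ t ∈ T, (if 2 ≤ (H.filter (fun v => offj j v = t)).card
          then (H.filter (fun v => offj j v = t)).card else 0) :=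
        Finset.sum_congr rfl hinner
    _ ≤ ∑ t ∈ T, 2 * ((H.filter (fun v => offj j v = t)).card - 1) := by
        refine Finset.sum_le_sum fun t ht => ?_
        split <;> omega
    _ = 2 * ∑ t ∈ T, ((H.filter (fun v => offj j v = t)).card - 1) :=
        (Finset.mul_sum _ _ _).symm
    _ ≤ 2 * (H.card - numEdges H j) := by
        apply Nat.mul_le_mul_left
        omega

lemma sum_deg_le {n p : ℕ} (H : Finset (Fin n → Fin p)) :
    ∑ v ∈ H, deg H v ≤ 2 * ∑ j : Fin n, (H.card - numEdges H j) := by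
  have hdeg : ∀ v, deg H v = ∑ j : Fin n, (if 2 ≤ (edgeF H j v).card then 1 else 0) := by
    intro v; rw [deg, Finset.card_filter]
  calc ∑ v ∈ H, deg H v
      = ∑ j : Fin n, ∑ v ∈ H, (if 2 ≤ (edgeF H j v).card then 1 else 0) := by
        simp only [hdeg]; exact Finset.sum_comm
    _ ≤ ∑ j : Fin n, 2 * (H.card - numEdges H j) :=
        Finset.sum_le_sum (fun j _ => per_direction H j)
    _ = 2 * ∑ j : Fin n, (H.card - numEdges H j) := (Finset.mul_sum _ _ _).symm

/-- The average degree of the one-inclusion graph is at most four times the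
exponential dimension. -/
theorem avd_le_four_dE {n p : ℕ} (H : Finset (Fin n → Fin p)) :
    avd H ≤ 4 * (dE H : ℚ) := by
  rcases Finset.eq_empty_or_nonempty H with rfl | hne
  · simp [avd]
  · have hNat : ∑ v ∈ H, deg H v ≤ 4 * dE H * H.card := by
      calc ∑ v ∈ H, deg H v
          ≤ 2 * ∑ j : Fin n, (H.card - numEdges H j) := sum_deg_le H
        _ ≤ 2 * (2 * dE H * H.card) := Nat.mul_le_mul_left _ (sum_defect_le n H)
        _ = 4 * dE H * H.card := by ring
    have hpos : (0 : ℚ) < (H.card : ℚ) := by exact_mod_cast Finset.card_pos.mpr hne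
    rw [avd, div_le_iff₀ hpos]
    have hcast : (∑ v ∈ H, (deg H v : ℚ)) = ((∑ v ∈ H, deg H v : ℕ) : ℚ) := by push_cast; ring
    rw [hcast]
    calc ((∑ v ∈ H, deg H v : ℕ) : ℚ) ≤ ((4 * dE H * H.card : ℕ) : ℚ) := by exact_mod_cast hNat
      _ = 4 * (dE H : ℚ) * (H.card : ℚ) := by push_cast; ring
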